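/- Let A be a unital *-algebra, H₁ and H₂ complex Hilbert spaces, (𝒟₁, π₁) a representation of A on H₁ and (𝒟, π) a representation of A on H₁ ⊕ H₂. Let I : H₁ → H₁ ⊕ H₂, ξ ↦ (ξ, 0), be the canonical inclusion, whose Hilbert space adjoint I* is the orthogonal projection (ξ, η) ↦ ξ. The following are equivalent: (1) I is a *-intertwiner from (𝒟₁, π₁) to (𝒟, π), i.e. both I and I* are intertwiners; (2) I is an intertwiner and 𝒟 = I(𝒟₁) + (𝒟 ∩ ({0} ⊕ H₂)); (3) there exists a representation (𝒟₂, π₂) of A on H₂ such that π = π₁ ⊕ π₂, i.e. 𝒟 = {(ξ, η) : ξ ∈ 𝒟₁, η ∈ 𝒟₂} and π(a)(ξ, η) = (π₁(a)ξ, π₂(a)η) for all a ∈ A, ξ ∈ 𝒟₁, η ∈ 𝒟₂. -/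

import Mathlib

/-- A representation of a unital `⋆`-algebra `A` on a complex Hilbert space `H`:
a dense subspace `dom ⊆ H` together with a unital algebra homomorphism `π` from `A` into the
endomorphisms of `dom` satisfying `⟪π a ξ, η⟫ = ⟪ξ, π (star a) η⟫`. -/
structure HilbertRep (A : Type*) [Ring A] [Algebra ℂ A] [StarRing A] [StarModule ℂ A]
    (H : Type*) [NormedAddCommGroup H] [InnerProductSpace ℂ H] where
  dom : Submodule ℂ H
  dense : Dense (dom : Set H)
  π : A → (dom →ₗ[ℂ] dom)
  π_one : π 1 = LinearMap.id
  π_mul : ∀ a b : A, π (a * b) = (π a).comp (π b)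
  π_add : ∀ a b : A, π (a + b) = π a + π b
  π_smul : ∀ (c : ℂ) (a : A), π (c • a) = c • π a
  π_star : ∀ (a : A) (ξ η : dom),
    (inner ℂ ((π a ξ : dom) : H) (η : H) : ℂ) = inner ℂ (ξ : H) ((π (star a) η : dom) : H)

variable {A : Type*} [Ring A] [Algebra ℂ A] [StarRing A] [StarModule ℂ A]
variable {H₁ H₂ : Type*} [NormedAddCommGroup H₁] [InnerProductSpace ℂ H₁] [CompleteSpace H₁]
  [NormedAddCommGroup H₂] [InnerProductSpace ℂ H₂] [CompleteSpace H₂]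

/-- The canonical inclusion `H₁ → H₁ ⊕ H₂`, `ξ ↦ (ξ, 0)`. -/
noncomputable def inlH (ξ : H₁) : WithLp 2 (H₁ × H₂) := (WithLp.equiv 2 (H₁ × H₂)).symm (ξ, 0)

/-- The orthogonal projection `H₁ ⊕ H₂ → H₁`, `(ξ, η) ↦ ξ`; it is the Hilbert space adjoint of
the canonical inclusion `inlH`. -/
noncomputable def fstH (x : WithLp 2 (H₁ × H₂)) : H₁ := (WithLp.equiv 2 (H₁ × H₂) x).1

/-- The projection to the second coordinate `H₁ ⊕ H₂ → H₂`. -/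
noncomputable def sndH (x : WithLp 2 (H₁ × H₂)) : H₂ := (WithLp.equiv 2 (H₁ × H₂) x).2

variable (ρ₁ : HilbertRep A H₁) (ρ : HilbertRep A (WithLp 2 (H₁ × H₂)))

/-- (1): the canonical inclusion `I : H₁ → H₁ ⊕ H₂` is a `⋆`-intertwiner from `π₁` to `π`,
i.e. both `I` and its adjoint `I*` (the projection onto `H₁`) are intertwiners. -/
def IsStarIntertwinerInl : Prop :=
  (∀ ξ : ρ₁.dom, ∃ ζ : ρ.dom, (ζ : WithLp 2 (H₁ × H₂)) = inlH (ξ : H₁) ∧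
    ∀ a : A, ((ρ.π a ζ : ρ.dom) : WithLp 2 (H₁ × H₂)) = inlH ((ρ₁.π a ξ : ρ₁.dom) : H₁)) ∧
  (∀ ζ : ρ.dom, ∃ ξ : ρ₁.dom, (ξ : H₁) = fstH (ζ : WithLp 2 (H₁ × H₂)) ∧
    ∀ a : A, ((ρ₁.π a ξ : ρ₁.dom) : H₁) = fstH ((ρ.π a ζ : ρ.dom) : WithLp 2 (H₁ × H₂)))

/-- (2): the canonical inclusion is an intertwiner and `𝒟 = I(𝒟₁) + (𝒟 ∩ ({0} ⊕ H₂))`. -/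
def IsIntertwinerAndSplits : Prop :=
  (∀ ξ : ρ₁.dom, ∃ ζ : ρ.dom, (ζ : WithLp 2 (H₁ × H₂)) = inlH (ξ : H₁) ∧
    ∀ a : A, ((ρ.π a ζ : ρ.dom) : WithLp 2 (H₁ × H₂)) = inlH ((ρ₁.π a ξ : ρ₁.dom) : H₁)) ∧
  (∀ ζ : ρ.dom, ∃ (ξ : ρ₁.dom) (η : WithLp 2 (H₁ × H₂)), η ∈ ρ.dom ∧ fstH η = 0 ∧
    (ζ : WithLp 2 (H₁ × H₂)) = inlH (ξ : H₁) + η)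

/-- (3): `π` is the direct sum of `π₁` and a representation `π₂` of `A` on `H₂`. -/
def IsDirectSum : Prop :=
  ∃ ρ₂ : HilbertRep A H₂,
    (∀ x : WithLp 2 (H₁ × H₂), x ∈ ρ.dom ↔ (fstH x ∈ ρ₁.dom ∧ sndH x ∈ ρ₂.dom)) ∧
    ∀ (a : A) (ζ : ρ.dom) (ξ : ρ₁.dom) (η : ρ₂.dom),
      (ζ : WithLp 2 (H₁ × H₂)) = (WithLp.equiv 2 (H₁ × H₂)).symm ((ξ : H₁), (η : H₂)) →
      ((ρ.π a ζ : ρ.dom) : WithLp 2 (H₁ × H₂)) =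
        (WithLp.equiv 2 (H₁ × H₂)).symm
          (((ρ₁.π a ξ : ρ₁.dom) : H₁), ((ρ₂.π a η : ρ₂.dom) : H₂))
set_option linter.unusedSectionVars false
set_option maxHeartbeats 800000

section AuxDefs

/-- The canonical inclusion `H₂ → H₁ ⊕ H₂`. -/
noncomputable def inrH (η : H₂) : WithLp 2 (H₁ × H₂) := (WithLp.equiv 2 (H₁ × H₂)).symm (0, η)

lemma fstH_inlH (ξ : H₁) : fstH (inlH ξ : WithLp 2 (H₁ × H₂)) = ξ := rfl
lemma sndH_inlH (ξ : H₁) : sndH (inlH ξ : WithLp 2 (H₁ × H₂)) = (0 : H₂) := rfl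
lemma fstH_inrH (η : H₂) : fstH (inrH η : WithLp 2 (H₁ × H₂)) = (0 : H₁) := rfl
lemma sndH_inrH (η : H₂) : sndH (inrH η : WithLp 2 (H₁ × H₂)) = η := rfl
lemma fstH_add (x y : WithLp 2 (H₁ × H₂)) : fstH (x + y) = fstH x + fstH y := rfl
lemma sndH_add (x y : WithLp 2 (H₁ × H₂)) : sndH (x + y) = sndH x + sndH y := rfl
lemma fstH_smul (c : ℂ) (x : WithLp 2 (H₁ × H₂)) : fstH (c • x) = c • fstH x := rfl
lemma sndH_smul (c : ℂ) (x : WithLp 2 (H₁ × H₂)) : sndH (c • x) = c • sndH x := rfl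

lemma prodH_ext {x y : WithLp 2 (H₁ × H₂)} (h1 : fstH x = fstH y) (h2 : sndH x = sndH y) :
    x = y := (WithLp.equiv 2 (H₁ × H₂)).injective (Prod.ext h1 h2)

lemma eq_inrH {x : WithLp 2 (H₁ × H₂)} (h : fstH x = 0) : x = inrH (sndH x) :=
  prodH_ext h rfl

lemma inner_prodH (x y : WithLp 2 (H₁ × H₂)) :
    (inner ℂ x y : ℂ) = inner ℂ (fstH x) (fstH y) + inner ℂ (sndH x) (sndH y) := rfl

lemma inrH_add (η η' : H₂) : (inrH (η + η') : WithLp 2 (H₁ × H₂)) = inrH η + inrH η' :=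
  prodH_ext (by rw [fstH_add, fstH_inrH, fstH_inrH, fstH_inrH, add_zero]) rfl

lemma inrH_smul (c : ℂ) (η : H₂) : (inrH (c • η) : WithLp 2 (H₁ × H₂)) = c • inrH η :=
  prodH_ext (by rw [fstH_smul, fstH_inrH, fstH_inrH, smul_zero]) rfl

lemma inrH_zero : (inrH (0 : H₂) : WithLp 2 (H₁ × H₂)) = 0 := rfl

lemma inlH_add_inrH (ξ : H₁) (η : H₂) :
    (WithLp.equiv 2 (H₁ × H₂)).symm (ξ, η) = inlH ξ + inrH η :=
  prodH_ext (by rw [fstH_add, fstH_inlH, fstH_inrH, add_zero]; rfl)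
    (by rw [sndH_add, sndH_inlH, sndH_inrH, zero_add]; rfl)

lemma inner_inrH_inrH (η η' : H₂) :
    (inner ℂ (inrH η : WithLp 2 (H₁ × H₂)) (inrH η') : ℂ) = inner ℂ η η' := by
  rw [inner_prodH, fstH_inrH, fstH_inrH, inner_zero_left, zero_add, sndH_inrH, sndH_inrH]

end AuxDefs
section Core

variable (ρ₁ : HilbertRep A H₁) (ρ : HilbertRep A (WithLp 2 (H₁ × H₂)))

/-- The statement that the canonical inclusion is an intertwiner. -/
def InlIntertwines : Prop :=
  ∀ ξ : ρ₁.dom, ∃ ζ : ρ.dom, (ζ : WithLp 2 (H₁ × H₂)) = inlH (ξ : H₁) ∧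
    ∀ a : A, ((ρ.π a ζ : ρ.dom) : WithLp 2 (H₁ × H₂)) = inlH ((ρ₁.π a ξ : ρ₁.dom) : H₁)

variable {ρ₁ ρ}

lemma mem_inl (h1 : InlIntertwines ρ₁ ρ) (ξ : ρ₁.dom) : inlH (ξ : H₁) ∈ ρ.dom := by
  obtain ⟨ζ, hζ, -⟩ := h1 ξ
  exact hζ ▸ ζ.2

lemma act_inl (h1 : InlIntertwines ρ₁ ρ) (ξ : ρ₁.dom) (hm : inlH (ξ : H₁) ∈ ρ.dom) (a : A) :
    ((ρ.π a ⟨inlH (ξ : H₁), hm⟩ : ρ.dom) : WithLp 2 (H₁ × H₂))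
      = inlH ((ρ₁.π a ξ : ρ₁.dom) : H₁) := by
  obtain ⟨ζ, hζ, hact⟩ := h1 ξ
  have : (⟨inlH (ξ : H₁), hm⟩ : ρ.dom) = ζ := Subtype.ext hζ.symm
  rw [this]
  exact hact a

/-- Key orthogonality lemma: if the inclusion intertwines, then `π a` preserves
`𝒟 ∩ ({0} ⊕ H₂)`. -/
lemma fst_act_zero (h1 : InlIntertwines ρ₁ ρ) (a : A) (ζ : ρ.dom)
    (hζ : fstH (ζ : WithLp 2 (H₁ × H₂)) = 0) :
    fstH ((ρ.π a ζ : ρ.dom) : WithLp 2 (H₁ × H₂)) = 0 := by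
  apply ρ₁.dense.eq_zero_of_inner_left (𝕜 := ℂ)
  intro v' hv'
  obtain ⟨v, rfl⟩ : ∃ v : ρ₁.dom, (v : H₁) = v' := ⟨⟨v', hv'⟩, rfl⟩
  have hm : inlH (v : H₁) ∈ ρ.dom := mem_inl h1 v
  have e1 : (inner ℂ ((ρ.π a ζ : ρ.dom) : WithLp 2 (H₁ × H₂)) (inlH (v : H₁)) : ℂ)
      = inner ℂ (fstH ((ρ.π a ζ : ρ.dom) : WithLp 2 (H₁ × H₂))) (v : H₁) := by
    rw [inner_prodH, fstH_inlH, sndH_inlH, inner_zero_right, add_zero]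
  have e2 : (inner ℂ ((ζ : ρ.dom) : WithLp 2 (H₁ × H₂))
      (inlH ((ρ₁.π (star a) v : ρ₁.dom) : H₁)) : ℂ) = 0 := by
    rw [inner_prodH, hζ, inner_zero_left, sndH_inlH, inner_zero_right, add_zero]
  have e3 := ρ.π_star a ζ ⟨inlH (v : H₁), hm⟩
  rw [show ((⟨inlH (v : H₁), hm⟩ : ρ.dom) : WithLp 2 (H₁ × H₂)) = inlH (v : H₁) from rfl,
    act_inl h1 v hm (star a)] at e3
  calc (inner ℂ (fstH ((ρ.π a ζ : ρ.dom) : WithLp 2 (H₁ × H₂))) (v : H₁) : ℂ)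
      = inner ℂ ((ρ.π a ζ : ρ.dom) : WithLp 2 (H₁ × H₂)) (inlH (v : H₁)) := e1.symm
    _ = 0 := e3.trans e2

end Core
section Build

variable {ρ₁ : HilbertRep A H₁} {ρ : HilbertRep A (WithLp 2 (H₁ × H₂))}

/-- The subspace `𝒟₂ = {η : (0, η) ∈ 𝒟} ⊆ H₂`. -/
noncomputable def D2 (ρ : HilbertRep A (WithLp 2 (H₁ × H₂))) : Submodule ℂ H₂ where
  carrier := {η | inrH η ∈ ρ.dom}
  add_mem' := fun {a b} ha hb => by
    show inrH (a + b) ∈ ρ.dom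
    rw [inrH_add]
    exact ρ.dom.add_mem ha hb
  zero_mem' := by
    show inrH (0 : H₂) ∈ ρ.dom
    rw [inrH_zero]
    exact ρ.dom.zero_mem
  smul_mem' := fun c a ha => by
    show inrH (c • a) ∈ ρ.dom
    rw [inrH_smul]
    exact ρ.dom.smul_mem c ha

lemma mem_D2_iff {η : H₂} : η ∈ D2 ρ ↔ inrH η ∈ ρ.dom := Iff.rfl

lemma act_inr (h1 : InlIntertwines ρ₁ ρ) (a : A) (η : H₂) (hη : inrH η ∈ ρ.dom) :
    ((ρ.π a ⟨inrH η, hη⟩ : ρ.dom) : WithLp 2 (H₁ × H₂))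
      = inrH (sndH ((ρ.π a ⟨inrH η, hη⟩ : ρ.dom) : WithLp 2 (H₁ × H₂))) :=
  eq_inrH (fst_act_zero h1 a ⟨inrH η, hη⟩ (fstH_inrH η))

/-- The action of `a` on `𝒟₂`. -/
noncomputable def pi2 (h1 : InlIntertwines ρ₁ ρ) (a : A) : D2 ρ →ₗ[ℂ] D2 ρ where
  toFun η := ⟨sndH ((ρ.π a ⟨inrH (η : H₂), η.2⟩ : ρ.dom) : WithLp 2 (H₁ × H₂)),
    act_inr h1 a (η : H₂) η.2 ▸ (ρ.π a ⟨inrH (η : H₂), η.2⟩).2⟩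
  map_add' η η' := by
    apply Subtype.ext
    show sndH _ = sndH _ + sndH _
    have hel : (⟨inrH (((η + η') : D2 ρ) : H₂), (η + η').2⟩ : ρ.dom)
        = ⟨inrH (η : H₂), η.2⟩ + ⟨inrH (η' : H₂), η'.2⟩ :=
      Subtype.ext (by
        show inrH (((η + η') : D2 ρ) : H₂) = inrH (η : H₂) + inrH (η' : H₂)
        rw [Submodule.coe_add, inrH_add])
    rw [hel, map_add, Submodule.coe_add, sndH_add]
  map_smul' c η := by
    apply Subtype.ext
    show sndH _ = c • sndH _
    have hel : (⟨inrH ((c • η : D2 ρ) : H₂), (c • η).2⟩ : ρ.dom)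
        = c • ⟨inrH (η : H₂), η.2⟩ :=
      Subtype.ext (by
        show inrH (((c • η) : D2 ρ) : H₂) = c • inrH (η : H₂)
        rw [Submodule.coe_smul, inrH_smul])
    rw [hel, map_smul, Submodule.coe_smul, sndH_smul]

lemma act_inr' (h1 : InlIntertwines ρ₁ ρ) (a : A) (η : D2 ρ) :
    ((ρ.π a ⟨inrH (η : H₂), η.2⟩ : ρ.dom) : WithLp 2 (H₁ × H₂))
      = inrH ((pi2 h1 a η : D2 ρ) : H₂) :=
  act_inr h1 a (η : H₂) η.2

lemma act_inr'' (h1 : InlIntertwines ρ₁ ρ) (a : A) (η : D2 ρ) :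
    (ρ.π a ⟨inrH (η : H₂), η.2⟩ : ρ.dom)
      = ⟨inrH ((pi2 h1 a η : D2 ρ) : H₂), (pi2 h1 a η).2⟩ :=
  Subtype.ext (act_inr' h1 a η)

end Build
section Rep2

variable {ρ₁ : HilbertRep A H₁} {ρ : HilbertRep A (WithLp 2 (H₁ × H₂))}

lemma sndH_continuous : Continuous (sndH : WithLp 2 (H₁ × H₂) → H₂) :=
  ((WithLp.prodContinuousLinearEquiv 2 ℂ H₁ H₂).continuous).snd

lemma D2_dense (h : IsIntertwinerAndSplits ρ₁ ρ) : Dense ((D2 ρ : Submodule ℂ H₂) : Set H₂) := by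
  have hsub : sndH '' (ρ.dom : Set (WithLp 2 (H₁ × H₂))) ⊆ ((D2 ρ : Submodule ℂ H₂) : Set H₂) := by
    rintro _ ⟨x, hx, rfl⟩
    obtain ⟨ξ, w, hw, hw0, hde⟩ := h.2 ⟨x, hx⟩
    have hde' : x = inlH (ξ : H₁) + w := hde
    show inrH (sndH x) ∈ ρ.dom
    rw [hde', sndH_add, sndH_inlH, zero_add, ← eq_inrH hw0]
    exact hw
  have hsurj : Function.Surjective (sndH : WithLp 2 (H₁ × H₂) → H₂) :=
    fun η => ⟨inrH η, rfl⟩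
  exact (hsurj.denseRange.dense_image sndH_continuous ρ.dense).mono hsub

/-- The representation of `A` on `H₂` extracted from a splitting. -/
noncomputable def rep2 (h : IsIntertwinerAndSplits ρ₁ ρ) : HilbertRep A H₂ where
  dom := D2 ρ
  dense := D2_dense h
  π a := pi2 h.1 a
  π_one := by
    apply LinearMap.ext; intro η
    apply Subtype.ext
    show sndH ((ρ.π 1 ⟨inrH (η : H₂), η.2⟩ : ρ.dom) : WithLp 2 (H₁ × H₂)) = (η : H₂)
    rw [ρ.π_one]
    rfl
  π_mul a b := by
    apply LinearMap.ext; intro η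
    apply Subtype.ext
    show sndH ((ρ.π (a * b) ⟨inrH (η : H₂), η.2⟩ : ρ.dom) : WithLp 2 (H₁ × H₂))
      = sndH ((ρ.π a ⟨inrH ((pi2 h.1 b η : D2 ρ) : H₂), (pi2 h.1 b η).2⟩ : ρ.dom) :
          WithLp 2 (H₁ × H₂))
    rw [ρ.π_mul, LinearMap.comp_apply, act_inr'' h.1 b η]
  π_add a b := by
    apply LinearMap.ext; intro η
    apply Subtype.ext
    show sndH ((ρ.π (a + b) ⟨inrH (η : H₂), η.2⟩ : ρ.dom) : WithLp 2 (H₁ × H₂)) = _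
    rw [ρ.π_add, LinearMap.add_apply, Submodule.coe_add, sndH_add]
    rfl
  π_smul c a := by
    apply LinearMap.ext; intro η
    apply Subtype.ext
    show sndH ((ρ.π (c • a) ⟨inrH (η : H₂), η.2⟩ : ρ.dom) : WithLp 2 (H₁ × H₂)) = _
    rw [ρ.π_smul, LinearMap.smul_apply, Submodule.coe_smul, sndH_smul]
    rfl
  π_star a η η' := by
    calc (inner ℂ ((pi2 h.1 a η : D2 ρ) : H₂) ((η' : D2 ρ) : H₂) : ℂ)
        = inner ℂ (inrH ((pi2 h.1 a η : D2 ρ) : H₂) : WithLp 2 (H₁ × H₂)) (inrH (η' : H₂)) :=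
          (inner_inrH_inrH _ _).symm
      _ = inner ℂ ((ρ.π a ⟨inrH (η : H₂), η.2⟩ : ρ.dom) : WithLp 2 (H₁ × H₂))
            (((⟨inrH (η' : H₂), η'.2⟩ : ρ.dom) : ρ.dom) : WithLp 2 (H₁ × H₂)) := by
          rw [act_inr' h.1 a η]
      _ = inner ℂ (((⟨inrH (η : H₂), η.2⟩ : ρ.dom) : ρ.dom) : WithLp 2 (H₁ × H₂))
            ((ρ.π (star a) ⟨inrH (η' : H₂), η'.2⟩ : ρ.dom) : WithLp 2 (H₁ × H₂)) :=
          ρ.π_star a _ _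
      _ = inner ℂ (inrH (η : H₂) : WithLp 2 (H₁ × H₂))
            (inrH ((pi2 h.1 (star a) η' : D2 ρ) : H₂)) := by
          rw [act_inr' h.1 (star a) η']
      _ = inner ℂ (η : H₂) ((pi2 h.1 (star a) η' : D2 ρ) : H₂) := inner_inrH_inrH _ _

end Rep2
section Final

variable {ρ₁ : HilbertRep A H₁} {ρ : HilbertRep A (WithLp 2 (H₁ × H₂))}

lemma fstH_sub (x y : WithLp 2 (H₁ × H₂)) : fstH (x - y) = fstH x - fstH y := rfl

lemma directSum_of_splits (h : IsIntertwinerAndSplits ρ₁ ρ) : IsDirectSum ρ₁ ρ := by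
  refine ⟨rep2 h, ?_, ?_⟩
  · intro x
    constructor
    · intro hx
      obtain ⟨ξ, w, hw, hw0, hde⟩ := h.2 ⟨x, hx⟩
      have hde' : x = inlH (ξ : H₁) + w := hde
      constructor
      · rw [hde', fstH_add, fstH_inlH, hw0, add_zero]; exact ξ.2
      · show inrH (sndH x) ∈ ρ.dom
        rw [hde', sndH_add, sndH_inlH, zero_add, ← eq_inrH hw0]
        exact hw
    · rintro ⟨hf, hs⟩
      have hx1 : inlH (fstH x) ∈ ρ.dom := mem_inl h.1 ⟨fstH x, hf⟩
      have hx2 : inrH (sndH x) ∈ ρ.dom := hs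
      have hx3 : x = inlH (fstH x) + inrH (sndH x) :=
        prodH_ext (by rw [fstH_add, fstH_inlH, fstH_inrH, add_zero])
          (by rw [sndH_add, sndH_inlH, sndH_inrH, zero_add])
      rw [hx3]; exact ρ.dom.add_mem hx1 hx2
  · intro a ζ ξ η hde
    have hζ : ζ = (⟨inlH (ξ : H₁), mem_inl h.1 ξ⟩ : ρ.dom) + ⟨inrH (η : H₂), η.2⟩ := by
      apply Subtype.ext
      rw [Submodule.coe_add]
      show (ζ : WithLp 2 (H₁ × H₂)) = inlH (ξ : H₁) + inrH (η : H₂)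
      rw [hde, inlH_add_inrH]
    rw [hζ, map_add, Submodule.coe_add, act_inl h.1 ξ _ a, act_inr' h.1 a η, inlH_add_inrH]
    rfl

lemma splits_of_star (h : IsStarIntertwinerInl ρ₁ ρ) : IsIntertwinerAndSplits ρ₁ ρ := by
  refine ⟨h.1, fun ζ => ?_⟩
  obtain ⟨ξ, hξ, -⟩ := h.2 ζ
  obtain ⟨ζ', hζ', -⟩ := h.1 ξ
  refine ⟨ξ, (ζ : WithLp 2 (H₁ × H₂)) - (ζ' : WithLp 2 (H₁ × H₂)),
    ρ.dom.sub_mem ζ.2 ζ'.2, ?_, ?_⟩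
  · rw [fstH_sub, hζ', fstH_inlH, ← hξ, sub_self]
  · rw [hζ']; abel

lemma star_of_directSum (h : IsDirectSum ρ₁ ρ) : IsStarIntertwinerInl ρ₁ ρ := by
  obtain ⟨ρ₂, hdom, hact⟩ := h
  constructor
  · intro ξ
    have hm : inlH (ξ : H₁) ∈ ρ.dom := (hdom _).mpr
      ⟨by rw [fstH_inlH]; exact ξ.2, by rw [sndH_inlH]; exact ρ₂.dom.zero_mem⟩
    refine ⟨⟨inlH (ξ : H₁), hm⟩, rfl, fun a => ?_⟩
    have key := hact a ⟨inlH (ξ : H₁), hm⟩ ξ 0 (by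
      show inlH (ξ : H₁) = (WithLp.equiv 2 (H₁ × H₂)).symm ((ξ : H₁), ((0 : ρ₂.dom) : H₂))
      rw [ZeroMemClass.coe_zero]
      rfl)
    rw [key, map_zero]
    show (WithLp.equiv 2 (H₁ × H₂)).symm (_, ((0 : ρ₂.dom) : H₂)) = _
    rw [ZeroMemClass.coe_zero]
    rfl
  · intro ζ
    have hmem := (hdom (ζ : WithLp 2 (H₁ × H₂))).mp ζ.2
    refine ⟨⟨fstH (ζ : WithLp 2 (H₁ × H₂)), hmem.1⟩, rfl, fun a => ?_⟩
    have key := hact a ζ ⟨fstH (ζ : WithLp 2 (H₁ × H₂)), hmem.1⟩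
      ⟨sndH (ζ : WithLp 2 (H₁ × H₂)), hmem.2⟩ rfl
    rw [key]
    rfl

end Final

/-- For the canonical inclusion `I : H₁ → H₁ ⊕ H₂` and representations `π₁` on `H₁` and `π` on
`H₁ ⊕ H₂`, the following are equivalent: (1) `I` is a `⋆`-intertwiner; (2) `I` is an intertwiner
and `𝒟 = I(𝒟₁) + (𝒟 ∩ ({0} ⊕ H₂))`; (3) `π = π₁ ⊕ π₂` for some representation `π₂` on `H₂`. -/
theorem inclusion_star_intertwiner_iff :
    (IsStarIntertwinerInl ρ₁ ρ ↔ IsDirectSum ρ₁ ρ) ∧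
    (IsIntertwinerAndSplits ρ₁ ρ ↔ IsDirectSum ρ₁ ρ) := by
  exact ⟨⟨fun h => directSum_of_splits (splits_of_star h), star_of_directSum⟩,
    ⟨directSum_of_splits, fun h => splits_of_star (star_of_directSum h)⟩⟩
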